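/- Let C be a closed, generating cone in a finite-dimensional real vector space V, and suppose C is irreducible (not a nontrivial direct sum of cones). If T : V → V is linear and there exist scalars c_ω ≥ 0 such that T(ω) = c_ω ω for every ω generating an extreme ray of C, then T is a nonnegative scalar multiple of the identity. -/

import Mathlib

/-- A (convex) cone in a real vector space, as a set. -/
def IsConeSet {V : Type*} [AddCommGroup V] [Module ℝ V] (C : Set V) : Prop :=
  (0 : V) ∈ C ∧ (∀ x ∈ C, ∀ t : ℝ, 0 ≤ t → t • x ∈ C) ∧ ∀ x ∈ C, ∀ y ∈ C, x + y ∈ C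

open Set Module
open scoped Classical

lemma IsConeSet.convex {V : Type*} [AddCommGroup V] [Module ℝ V] {C : Set V}
    (hC : IsConeSet C) : Convex ℝ C := fun x hx y hy a b ha hb _ =>
  hC.2.2 _ (hC.2.1 x hx a ha) _ (hC.2.1 y hy b hb)

lemma exists_dual_of_not_mem {V : Type*} [NormedAddCommGroup V] [NormedSpace ℝ V]
    {C : Set V} (hC : IsConeSet C) (hclosed : IsClosed C)
    {z : V} (hz : z ∉ C) : ∃ g : Module.Dual ℝ V, (∀ x ∈ C, 0 ≤ g x) ∧ g z < 0 := by
  obtain ⟨g, u, hgC, hgz⟩ := geometric_hahn_banach_closed_point hC.convex hclosed hz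
  have hu : 0 < u := by simpa using hgC 0 hC.1
  have hnonpos : ∀ a ∈ C, g a ≤ 0 := by
    intro a ha
    by_contra h
    push_neg at h
    have h2 := hgC ((u / g a + 1) • a) (hC.2.1 a ha _ (by positivity))
    rw [map_smul, smul_eq_mul] at h2
    have h3 : (u / g a + 1) * g a = u + g a := by field_simp
    linarith
  refine ⟨-(g : V →ₗ[ℝ] ℝ), fun x hx => by simpa using hnonpos x hx, ?_⟩
  simp only [LinearMap.neg_apply, ContinuousLinearMap.coe_coe]
  linarith

lemma exists_pos_functional {V : Type*} [NormedAddCommGroup V] [NormedSpace ℝ V]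
    [FiniteDimensional ℝ V]
    {C : Set V} (hC : IsConeSet C) (hclosed : IsClosed C)
    (hpointed : ∀ x ∈ C, -x ∈ C → x = 0) :
    ∃ f : V →L[ℝ] ℝ, ∀ x ∈ C, x ≠ 0 → 0 < f x := by
  set S : Set (Module.Dual ℝ V) := {g | ∀ x ∈ C, 0 ≤ g x} with hS
  have hspan : Submodule.span ℝ S = ⊤ := by
    apply Submodule.span_eq_top_of_ne_zero
    intro z hz
    by_cases hzC : z ∈ C
    · have hnz : -z ∉ C := fun h => hz (hpointed z hzC h)
      obtain ⟨g, hg, hgz⟩ := exists_dual_of_not_mem hC hclosed hnz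
      refine ⟨g, hg, fun h => ?_⟩
      rw [map_neg, h] at hgz
      exact absurd hgz (by norm_num)
    · obtain ⟨g, hg, hgz⟩ := exists_dual_of_not_mem hC hclosed hzC
      exact ⟨g, hg, ne_of_lt hgz⟩
  haveI : FiniteDimensional ℝ (Module.Dual ℝ V) := inferInstance
  have h1 : ∀ i : Fin (Module.finrank ℝ (Module.Dual ℝ V)),
      ∃ t : Finset (Module.Dual ℝ V), ↑t ⊆ S ∧
        (Module.finBasis ℝ (Module.Dual ℝ V)) i ∈ Submodule.span ℝ (↑t : Set _) := by
    intro i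
    exact Submodule.mem_span_finite_of_mem_span (by rw [hspan]; trivial)
  choose ts hts hmem using h1
  set t : Finset (Module.Dual ℝ V) := Finset.univ.biUnion ts with ht
  have htS : ↑t ⊆ S := by
    intro g hg
    simp only [ht, Finset.coe_biUnion, Finset.coe_univ, mem_iUnion] at hg
    obtain ⟨i, _, hgi⟩ := hg
    exact hts i hgi
  have hspan_t : Submodule.span ℝ (↑t : Set (Module.Dual ℝ V)) = ⊤ := by
    rw [eq_top_iff, ← (Module.finBasis ℝ (Module.Dual ℝ V)).span_eq]
    rw [Submodule.span_le]
    rintro g ⟨i, rfl⟩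
    exact Submodule.span_mono
      (by rw [ht]; exact_mod_cast Finset.coe_subset.mpr (Finset.subset_biUnion_of_mem ts (Finset.mem_univ i)))
      (hmem i)
  set F : Module.Dual ℝ V := ∑ g ∈ t, g with hF
  refine ⟨LinearMap.toContinuousLinearMap F, fun x hx hx0 => ?_⟩
  have hFx : F x = ∑ g ∈ t, g x := by simp [hF]
  have hnn : 0 ≤ F x := by
    rw [hFx]
    exact Finset.sum_nonneg fun g hg => htS hg x hx
  rcases lt_or_eq_of_le hnn with h | h
  · simpa using h
  · exfalso
    have hzero : ∀ g ∈ t, g x = 0 :=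
      (Finset.sum_eq_zero_iff_of_nonneg fun g hg => htS hg x hx).mp (by rw [← hFx, ← h])
    have hall : ∀ φ : Module.Dual ℝ V, φ x = 0 := by
      intro φ
      have hφ : φ ∈ Submodule.span ℝ (↑t : Set (Module.Dual ℝ V)) := by rw [hspan_t]; trivial
      induction hφ using Submodule.span_induction with
      | mem g hg => exact hzero g hg
      | zero => simp
      | add a b _ _ ha hb => simp [ha, hb]
      | smul r a _ ha => simp [ha]
    exact hx0 ((Module.forall_dual_apply_eq_zero_iff ℝ x).mp hall)

/-- `ω` generates an extreme ray of the cone `C`. -/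
def IsExtremeRayGen {V : Type*} [AddCommGroup V] [Module ℝ V] (C : Set V) (ω : V) : Prop :=
  ω ∈ C ∧ ω ≠ 0 ∧ ∀ x ∈ C, ∀ y ∈ C, x + y = ω → ∃ t : ℝ, 0 ≤ t ∧ x = t • ω

/-- An irreducible cone: not a nontrivial direct sum of two cones spanning
independent subspaces. -/
def IsIrreducibleCone {V : Type*} [AddCommGroup V] [Module ℝ V] (C : Set V) : Prop :=
  IsConeSet C ∧ ¬∃ D E : Set V, IsConeSet D ∧ IsConeSet E ∧ D ≠ {0} ∧ E ≠ {0} ∧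
    (Submodule.span ℝ D ⊓ Submodule.span ℝ E = ⊥) ∧
    C = {x | ∃ d ∈ D, ∃ e ∈ E, x = d + e}

/-- If `C` is a closed, pointed, generating, irreducible cone in a
finite-dimensional space and the linear map `T` scales every extreme ray generator of `C`
by a nonnegative constant, then `T` is a nonnegative multiple of the identity. -/
theorem nondisturbing_on_irreducible_cone_is_scalar
    {V : Type*} [NormedAddCommGroup V] [NormedSpace ℝ V] [FiniteDimensional ℝ V]
    (C : Set V) (hC : IsConeSet C) (hclosed : IsClosed C)
    (hpointed : ∀ x ∈ C, -x ∈ C → x = 0)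
    (hgen : Submodule.span ℝ C = ⊤)
    (hirr : IsIrreducibleCone C)
    (T : V →ₗ[ℝ] V)
    (hT : ∀ ω, IsExtremeRayGen C ω → ∃ c : ℝ, 0 ≤ c ∧ T ω = c • ω) :
    ∃ c : ℝ, 0 ≤ c ∧ ∀ x : V, T x = c • x := by
  rcases subsingleton_or_nontrivial V with hV | hV
  · exact ⟨0, le_refl 0, fun x => Subsingleton.elim _ _⟩
  obtain ⟨f, hfpos⟩ := exists_pos_functional hC hclosed hpointed
  -- the compact convex base B
  set B : Set V := C ∩ {x | f x = 1} with hB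
  have hBsub : B ⊆ C := inter_subset_left
  have hBconv : Convex ℝ B := hC.convex.inter (convex_hyperplane f.toLinearMap.isLinear 1)
  have hBclosed : IsClosed B := hclosed.inter (isClosed_eq f.continuous continuous_const)
  have hBne0 : ∀ x ∈ B, x ≠ 0 := by
    rintro x ⟨_, hx1⟩ rfl
    simp at hx1
  -- a nonzero element of C
  obtain ⟨x₀, hx₀C, hx₀⟩ : ∃ x ∈ C, x ≠ 0 := by
    by_contra h
    push_neg at h
    have : C ⊆ {0} := fun x hx => h x hx
    have : Submodule.span ℝ C ≤ ⊥ := by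
      rw [← Submodule.span_zero_singleton (R := ℝ) (M := V)]
      exact Submodule.span_mono this
    rw [hgen] at this
    obtain ⟨y, hy⟩ := exists_ne (0 : V)
    exact hy ((Submodule.mem_bot ℝ).mp (this trivial))
  have hmemB : ∀ x ∈ C, x ≠ 0 → (f x)⁻¹ • x ∈ B := by
    intro x hx hx0
    have hfx : 0 < f x := hfpos x hx hx0
    exact ⟨hC.2.1 x hx _ (inv_nonneg.mpr hfx.le), by simp [inv_mul_cancel₀ hfx.ne']⟩
  have hBne : B.Nonempty := ⟨_, hmemB x₀ hx₀C hx₀⟩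
  -- B is compact
  have hBcompact : IsCompact B := by
    have hS1 : IsCompact (C ∩ Metric.sphere (0 : V) 1) :=
      (isCompact_sphere 0 1).inter_left hclosed
    have hS1ne : (C ∩ Metric.sphere (0 : V) 1).Nonempty := by
      refine ⟨‖x₀‖⁻¹ • x₀, hC.2.1 x₀ hx₀C _ (by positivity), ?_⟩
      rw [mem_sphere_zero_iff_norm, norm_smul, norm_inv, norm_norm,
        inv_mul_cancel₀ (norm_ne_zero_iff.mpr hx₀)]
    obtain ⟨w, hwS, hwmin⟩ := hS1.exists_isMinOn hS1ne f.continuous.continuousOn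
    have hw0 : w ≠ 0 := by
      intro h; rw [h] at hwS
      simpa using hwS.2
    have hm : 0 < f w := hfpos w hwS.1 hw0
    apply Metric.isCompact_of_isClosed_isBounded hBclosed
    rw [isBounded_iff_forall_norm_le]
    refine ⟨(f w)⁻¹, fun x hx => ?_⟩
    have hx0 : x ≠ 0 := hBne0 x hx
    have hu : ‖x‖⁻¹ • x ∈ C ∩ Metric.sphere (0 : V) 1 :=
      ⟨hC.2.1 x (hBsub hx) _ (by positivity), by
        rw [mem_sphere_zero_iff_norm, norm_smul, norm_inv, norm_norm,
          inv_mul_cancel₀ (norm_ne_zero_iff.mpr hx0)]⟩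
    have h1 : f w ≤ f (‖x‖⁻¹ • x) := hwmin hu
    rw [map_smul, smul_eq_mul, hx.2, mul_one] at h1
    have hnx : 0 < ‖x‖ := norm_pos_iff.mpr hx0
    rw [le_inv_comm₀ hm hnx] at h1
    exact h1
  -- extreme points of B generate extreme rays of C
  have hext : ∀ ω ∈ B.extremePoints ℝ, IsExtremeRayGen C ω := by
    intro ω hω
    obtain ⟨hωB, hωext⟩ := mem_extremePoints.mp hω
    refine ⟨hBsub hωB, hBne0 ω hωB, ?_⟩
    intro x hx y hy hxy
    by_cases hx0 : x = 0
    · exact ⟨0, le_refl 0, by simp [hx0]⟩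
    by_cases hy0 : y = 0
    · refine ⟨1, zero_le_one, by rw [one_smul, ← hxy, hy0, add_zero]⟩
    have hfx : 0 < f x := hfpos x hx hx0
    have hfy : 0 < f y := hfpos y hy hy0
    have hfsum : f x + f y = 1 := by
      rw [← map_add, hxy]; exact hωB.2
    have hseg : ω ∈ openSegment ℝ ((f x)⁻¹ • x) ((f y)⁻¹ • y) := by
      refine ⟨f x, f y, hfx, hfy, hfsum, ?_⟩
      rw [smul_inv_smul₀ hfx.ne', smul_inv_smul₀ hfy.ne', hxy]
    have := (hωext _ (hmemB x hx hx0) _ (hmemB y hy hy0) hseg).1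
    refine ⟨f x, hfx.le, ?_⟩
    rw [← this, smul_inv_smul₀ hfx.ne']
  -- Krein-Milman
  have hKM : closure (convexHull ℝ (B.extremePoints ℝ)) = B :=
    closure_convexHull_extremePoints hBcompact hBconv
  set K : Set V := closure (B.extremePoints ℝ) with hK
  have hKB : K ⊆ B := closure_minimal extremePoints_subset hBclosed
  have hKcomp : IsCompact K := hBcompact.of_isClosed_subset isClosed_closure hKB
  have hKne : K.Nonempty := (hBcompact.extremePoints_nonempty hBne).mono subset_closure
  -- every element of K is an eigenvector with nonnegative eigenvalue
  have hTcont : Continuous T := T.continuous_of_finiteDimensional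
  have hKeig : ∀ k ∈ K, T k = f (T k) • k ∧ 0 ≤ f (T k) := by
    have hZ : IsClosed {x : V | T x = f (T x) • x ∧ 0 ≤ f (T x)} := by
      apply IsClosed.inter
      · exact isClosed_eq hTcont ((f.continuous.comp hTcont).smul continuous_id)
      · exact isClosed_le continuous_const (f.continuous.comp hTcont)
    have hsub : B.extremePoints ℝ ⊆ {x : V | T x = f (T x) • x ∧ 0 ≤ f (T x)} := by
      intro ω hω
      obtain ⟨c, hc0, hTω⟩ := hT ω (hext ω hω)
      have hfω : f ω = 1 := (extremePoints_subset hω).2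
      have : f (T ω) = c := by rw [hTω, map_smul, smul_eq_mul, hfω, mul_one]
      exact ⟨by rw [this]; exact hTω, by rw [this]; exact hc0⟩
    exact fun k hk => closure_minimal hsub hZ hk
  -- span of K is everything
  have hspanK : Submodule.span ℝ K = ⊤ := by
    rw [eq_top_iff, ← hgen, Submodule.span_le]
    intro x hx
    by_cases hx0 : x = 0
    · simp [hx0, Submodule.zero_mem]
    have hxB : (f x)⁻¹ • x ∈ B := hmemB x hx hx0
    have hBspan : B ⊆ (Submodule.span ℝ K : Set V) := by
      rw [← hKM]
      refine closure_minimal ?_ (Submodule.closed_of_finiteDimensional _)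
      exact convexHull_min (subset_closure.trans Submodule.subset_span)
        (Submodule.span ℝ K).convex
    have hmem := hBspan hxB
    have : x = (f x) • ((f x)⁻¹ • x) := (smul_inv_smul₀ (hfpos x hx hx0).ne' x).symm
    rw [this]
    exact Submodule.smul_mem _ _ hmem
  -- the minimal eigenvalue on K
  obtain ⟨k₁, hk₁K, hk₁min⟩ := hKcomp.exists_isMinOn hKne
    ((f.continuous.comp hTcont).continuousOn)
  set c : ℝ := f (T k₁) with hc
  have hc0 : 0 ≤ c := (hKeig k₁ hk₁K).2
  -- all eigenvalues on K are equal to c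
  have hall : ∀ k ∈ K, f (T k) = c := by
    by_contra hcon
    push_neg at hcon
    obtain ⟨k₀, hk₀K, hk₀ne⟩ := hcon
    set Kc : Set V := {k | k ∈ K ∧ f (T k) = c} with hKcdef
    set Kn : Set V := {k | k ∈ K ∧ f (T k) ≠ c} with hKndef
    set W₁ : Submodule ℝ V := Submodule.span ℝ Kc with hW₁def
    set W₂ : Submodule ℝ V := Submodule.span ℝ Kn with hW₂def
    have hW1 : W₁ ≤ Module.End.eigenspace T c := by
      rw [hW₁def, Submodule.span_le]
      rintro k ⟨hkK, hkc⟩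
      rw [SetLike.mem_coe, Module.End.mem_eigenspace_iff, (hKeig k hkK).1, hkc]
    have hW2 : W₂ ≤ ⨆ (μ : ℝ) (_ : μ ≠ c), Module.End.eigenspace T μ := by
      rw [hW₂def, Submodule.span_le]
      rintro k ⟨hkK, hkc⟩
      have hk : k ∈ Module.End.eigenspace T (f (T k)) :=
        Module.End.mem_eigenspace_iff.mpr (hKeig k hkK).1
      rw [SetLike.mem_coe]
      exact (le_iSup₂_of_le (f (T k)) hkc le_rfl : Module.End.eigenspace T (f (T k)) ≤ _) hk
    have hdisj : Disjoint W₁ W₂ :=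
      Disjoint.mono hW1 hW2 ((Module.End.eigenspaces_iSupIndep T) c)
    have hKsplit : K = Kc ∪ Kn := by
      ext k
      constructor
      · intro hk
        by_cases h : f (T k) = c
        · exact Or.inl ⟨hk, h⟩
        · exact Or.inr ⟨hk, h⟩
      · rintro (⟨hk, _⟩ | ⟨hk, _⟩) <;> exact hk
    have hsup : W₁ ⊔ W₂ = ⊤ := by
      rw [hW₁def, hW₂def, ← Submodule.span_union, ← hKsplit, hspanK]
    have hcompl : IsCompl W₁ W₂ := ⟨hdisj, codisjoint_iff.mpr hsup⟩
    set P₁ : V →ₗ[ℝ] V := W₁.subtype ∘ₗ (W₁.projectionOnto W₂ hcompl) with hP₁def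
    set P₂ : V →ₗ[ℝ] V := W₂.subtype ∘ₗ (W₂.projectionOnto W₁ hcompl.symm) with hP₂def
    have hP1 : ∀ d e : V, d ∈ W₁ → e ∈ W₂ → P₁ (d + e) = d := by
      intro d e hd he
      have h1 : (W₁.projectionOnto W₂ hcompl) (d + e) = ⟨d, hd⟩ := by
        rw [map_add, Submodule.linearProjOfIsCompl_apply_right' hcompl he, add_zero]
        exact Submodule.linearProjOfIsCompl_apply_left hcompl ⟨d, hd⟩
      simp [hP₁def, h1]
    have hP2 : ∀ d e : V, d ∈ W₁ → e ∈ W₂ → P₂ (d + e) = e := by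
      intro d e hd he
      have h1 : (W₂.projectionOnto W₁ hcompl.symm) (d + e) = ⟨e, he⟩ := by
        rw [map_add, Submodule.linearProjOfIsCompl_apply_right' hcompl.symm hd, zero_add]
        exact Submodule.linearProjOfIsCompl_apply_left hcompl.symm ⟨e, he⟩
      simp [hP₂def, h1]
    have hsum : ∀ x : V, P₁ x + P₂ x = x := by
      intro x
      simpa [hP₁def, hP₂def] using
        Submodule.projection_add_projection_eq_self hcompl x
    set D : Set V := C ∩ ↑W₁ with hDdef
    set E : Set V := C ∩ ↑W₂ with hEdef
    have hDcone : IsConeSet D :=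
      ⟨⟨hC.1, W₁.zero_mem⟩, fun x hx t ht => ⟨hC.2.1 x hx.1 t ht, W₁.smul_mem t hx.2⟩,
        fun x hx y hy => ⟨hC.2.2 x hx.1 y hy.1, W₁.add_mem hx.2 hy.2⟩⟩
    have hEcone : IsConeSet E :=
      ⟨⟨hC.1, W₂.zero_mem⟩, fun x hx t ht => ⟨hC.2.1 x hx.1 t ht, W₂.smul_mem t hx.2⟩,
        fun x hx y hy => ⟨hC.2.2 x hx.1 y hy.1, W₂.add_mem hx.2 hy.2⟩⟩
    have hk₁D : k₁ ∈ D := ⟨hBsub (hKB hk₁K), Submodule.subset_span ⟨hk₁K, rfl⟩⟩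
    have hk₀E : k₀ ∈ E := ⟨hBsub (hKB hk₀K), Submodule.subset_span ⟨hk₀K, hk₀ne⟩⟩
    have hDne : D ≠ {0} := by
      intro h
      rw [h] at hk₁D
      exact hBne0 k₁ (hKB hk₁K) hk₁D
    have hEne : E ≠ {0} := by
      intro h
      rw [h] at hk₀E
      exact hBne0 k₀ (hKB hk₀K) hk₀E
    set DE : Set V := {x | ∃ d ∈ D, ∃ e ∈ E, x = d + e} with hDEdef
    have hDEproj : DE = P₁ ⁻¹' D ∩ P₂ ⁻¹' E := by
      ext x
      constructor
      · rintro ⟨d, hd, e, he, rfl⟩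
        refine ⟨?_, ?_⟩
        · show P₁ (d + e) ∈ D
          rw [hP1 d e hd.2 he.2]; exact hd
        · show P₂ (d + e) ∈ E
          rw [hP2 d e hd.2 he.2]; exact he
      · rintro ⟨h1, h2⟩
        exact ⟨P₁ x, h1, P₂ x, h2, (hsum x).symm⟩
    have hDclosed : IsClosed D := hclosed.inter (W₁.closed_of_finiteDimensional)
    have hEclosed : IsClosed E := hclosed.inter (W₂.closed_of_finiteDimensional)
    have hDEclosed : IsClosed DE := by
      rw [hDEproj]
      exact (hDclosed.preimage P₁.continuous_of_finiteDimensional).inter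
        (hEclosed.preimage P₂.continuous_of_finiteDimensional)
    have hDEconv : Convex ℝ DE := by
      rw [hDEproj]
      exact ((hC.convex.inter W₁.convex).linear_preimage P₁).inter
        ((hC.convex.inter W₂.convex).linear_preimage P₂)
    have hextDE : B.extremePoints ℝ ⊆ DE := by
      intro ω hω
      have hωK : ω ∈ K := subset_closure hω
      have hωC : ω ∈ C := hBsub (extremePoints_subset hω)
      by_cases h : f (T ω) = c
      · exact ⟨ω, ⟨hωC, Submodule.subset_span ⟨hωK, h⟩⟩, 0, ⟨hC.1, W₂.zero_mem⟩,
          (add_zero ω).symm⟩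
      · exact ⟨0, ⟨hC.1, W₁.zero_mem⟩, ω, ⟨hωC, Submodule.subset_span ⟨hωK, h⟩⟩,
          (zero_add ω).symm⟩
    have hBDE : B ⊆ DE := by
      rw [← hKM]
      exact closure_minimal (convexHull_min hextDE hDEconv) hDEclosed
    have hCDE : C = DE := by
      apply Subset.antisymm
      · intro x hx
        by_cases hx0 : x = 0
        · exact ⟨0, ⟨hC.1, W₁.zero_mem⟩, 0, ⟨hC.1, W₂.zero_mem⟩, by rw [hx0, add_zero]⟩
        · obtain ⟨d, hd, e, he, hde⟩ := hBDE (hmemB x hx hx0)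
          refine ⟨(f x) • d, ⟨hC.2.1 d hd.1 _ (hfpos x hx hx0).le, W₁.smul_mem _ hd.2⟩,
            (f x) • e, ⟨hC.2.1 e he.1 _ (hfpos x hx hx0).le, W₂.smul_mem _ he.2⟩, ?_⟩
          rw [← smul_add, ← hde, smul_inv_smul₀ (hfpos x hx hx0).ne']
      · rintro x ⟨d, hd, e, he, rfl⟩
        exact hC.2.2 d hd.1 e he.1
    have hspanDE : Submodule.span ℝ D ⊓ Submodule.span ℝ E = ⊥ := by
      have hD : Submodule.span ℝ D ≤ W₁ := Submodule.span_le.mpr inter_subset_right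
      have hE : Submodule.span ℝ E ≤ W₂ := Submodule.span_le.mpr inter_subset_right
      exact disjoint_iff.mp (hdisj.mono hD hE)
    exact hirr.2 ⟨D, E, hDcone, hEcone, hDne, hEne, hspanDE, hCDE⟩
  -- conclude
  refine ⟨c, hc0, fun x => ?_⟩
  have htop : (⊤ : Submodule ℝ V) ≤ Module.End.eigenspace T c := by
    rw [← hspanK, Submodule.span_le]
    intro k hk
    rw [SetLike.mem_coe, Module.End.mem_eigenspace_iff]
    rw [(hKeig k hk).1, hall k hk]
  exact Module.End.mem_eigenspace_iff.mp (htop trivial)
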